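/- There exists a universal constant C₂ > 0 such that the following holds. Suppose k/σ² ≥ C₂ (and p/k is sufficiently large). Set ε = log log(p/k)/(2·log(p/k)), τ = k·(1 − 1/log²(1 + k/σ²)), and define g(s) = −s·log(p/k) − n*·log(1 − s/(k + σ²)) for s ∈ [0, k]. Then g(τ) ≤ −(1/2)·k·log(p/k) and g(εk) ≤ −(εk/2)·log(p/k). -/

import Mathlib

open Real

noncomputable section

/-- The critical sample size `n* = 2k log(p/k) / log(1 + k/σ²)`. -/
def nstar (p k : ℕ) (σ : ℝ) : ℝ :=
  2 * k * Real.log ((p : ℝ) / (k : ℝ)) / Real.log (1 + (k : ℝ) / σ ^ 2)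

set_option maxHeartbeats 1000000 in
/-- Claim `claim:g_bound`: there is a universal `C₂ > 0` (and a universal
threshold `M` for `p/k`) such that if `k/σ² ≥ C₂` and `p/k ≥ M`, then with
`ε = log log(p/k)/(2 log(p/k))`, `τ = k(1 − 1/log²(1+k/σ²))` and
`g(s) = −s log(p/k) − n* log(1 − s/(k+σ²))`, one has `g(τ) ≤ −(1/2)k log(p/k)` and
`g(εk) ≤ −(εk/2) log(p/k)`. -/
theorem claim_g_bound :
    ∃ C₂ > 0, ∃ M > 0, ∀ (p k : ℕ) (σ : ℝ), 0 < σ → 0 < k →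
      C₂ ≤ (k : ℝ) / σ ^ 2 → M ≤ (p : ℝ) / k →
      (-((k : ℝ) * (1 - 1 / (Real.log (1 + (k : ℝ) / σ ^ 2)) ^ 2)) *
            Real.log ((p : ℝ) / k) -
          nstar p k σ *
            Real.log (1 - (k : ℝ) * (1 - 1 / (Real.log (1 + (k : ℝ) / σ ^ 2)) ^ 2) /
              ((k : ℝ) + σ ^ 2)) ≤
        -(1 / 2) * k * Real.log ((p : ℝ) / k)) ∧
      (-(Real.log (Real.log ((p : ℝ) / k)) / (2 * Real.log ((p : ℝ) / k)) * k) *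
            Real.log ((p : ℝ) / k) -
          nstar p k σ *
            Real.log (1 - Real.log (Real.log ((p : ℝ) / k)) /
              (2 * Real.log ((p : ℝ) / k)) * k / ((k : ℝ) + σ ^ 2)) ≤
        -(Real.log (Real.log ((p : ℝ) / k)) / (2 * Real.log ((p : ℝ) / k)) * k / 2) *
          Real.log ((p : ℝ) / k)) := by
  refine ⟨Real.exp 400, Real.exp_pos _, Real.exp 2, Real.exp_pos _, ?_⟩
  intro p k σ hσ hk hC hM
  set r : ℝ := (k : ℝ) / σ ^ 2 with hr_def
  set L : ℝ := Real.log ((p : ℝ) / (k : ℝ)) with hL_def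
  set A : ℝ := Real.log (1 + r) with hA_def
  clear_value r L A
  have hσ2 : (0:ℝ) < σ ^ 2 := by positivity
  have hk1 : (1:ℝ) ≤ (k : ℝ) := by exact_mod_cast hk
  have hkpos : (0:ℝ) < (k : ℝ) := by linarith
  have hr1 : (1:ℝ) ≤ r := le_trans (by
    have := Real.add_one_le_exp (400:ℝ); linarith) hC
  have hr0 : (0:ℝ) < r := by linarith
  have hA400 : (400:ℝ) ≤ A := by
    rw [hA_def]
    calc (400:ℝ) = Real.log (Real.exp 400) := (Real.log_exp _).symm
    _ ≤ Real.log (1 + r) := by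
        apply Real.log_le_log (Real.exp_pos _); linarith
  have hA0 : (0:ℝ) < A := by linarith
  have hpk0 : (0:ℝ) < (p:ℝ)/(k:ℝ) := lt_of_lt_of_le (Real.exp_pos 2) hM
  have hL2 : (2:ℝ) ≤ L := by
    rw [hL_def]
    calc (2:ℝ) = Real.log (Real.exp 2) := (Real.log_exp _).symm
    _ ≤ Real.log ((p:ℝ)/(k:ℝ)) := Real.log_le_log (Real.exp_pos _) hM
  have hL0 : (0:ℝ) < L := by linarith
  have hk_eq : (k:ℝ) = r * σ ^ 2 := by
    rw [hr_def]; field_simp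
  have hnstar : nstar p k σ = 2 * (k:ℝ) * L / A := by
    rw [hL_def, hA_def, hr_def]; rfl
  -- sqrt facts
  set s : ℝ := Real.sqrt A with hs_def
  have hs20 : (20:ℝ) ≤ s := by
    rw [hs_def]
    have : (20:ℝ) = Real.sqrt 400 := by
      rw [show (400:ℝ) = 20^2 by norm_num, Real.sqrt_sq]; norm_num
    rw [this]; exact Real.sqrt_le_sqrt hA400
  have hsA : s ^ 2 = A := by rw [hs_def]; exact Real.sq_sqrt (le_of_lt hA0)
  clear_value s
  have hs0 : (0:ℝ) < s := by linarith
  have hlogA : Real.log A ≤ 2 * s - 2 := by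
    have h1 : Real.log s ≤ s - 1 := Real.log_le_sub_one_of_pos hs0
    have h2 : Real.log A = 2 * Real.log s := by
      rw [hs_def, Real.log_sqrt (le_of_lt hA0)]; ring
    linarith
  have hlog2 : Real.log 2 ≤ 1 := by
    have := Real.log_le_sub_one_of_pos (show (0:ℝ) < 2 by norm_num); linarith
  have hlogr : A - Real.log 2 ≤ Real.log r := by
    have h1 : A ≤ Real.log (2 * r) := by
      rw [hA_def]; apply Real.log_le_log (by linarith); linarith
    rw [Real.log_mul (by norm_num) (ne_of_gt hr0)] at h1
    linarith
  constructor
  · -- first bound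
    set D : ℝ := 1 + r / A ^ 2 with hD_def
    clear_value D
    have hD1 : (1:ℝ) ≤ D := by
      rw [hD_def]; have : (0:ℝ) ≤ r / A^2 := by positivity
      linarith
    have hD0 : (0:ℝ) < D := by linarith
    have hlogD_low : A + 3 - 4 * s ≤ Real.log D := by
      have h1 : Real.log (r / A ^ 2) ≤ Real.log D := by
        apply Real.log_le_log (by positivity)
        rw [hD_def]; linarith
      have h2 : Real.log (r / A ^ 2) = Real.log r - 2 * Real.log A := by
        rw [Real.log_div (ne_of_gt hr0) (by positivity), Real.log_pow]
        push_cast; ring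
      nlinarith [hlogr, hlogA, hlog2]
    have hKey2 : 3/2 * A ^ 2 + 1 ≤ 2 * A * Real.log D := by
      have h1 : 2 * A * (A + 3 - 4 * s) ≤ 2 * A * Real.log D :=
        mul_le_mul_of_nonneg_left hlogD_low (by linarith)
      have h16 : (0:ℝ) ≤ s ^ 3 * (s - 16) := by
        apply mul_nonneg (by positivity); linarith
      nlinarith [hsA, hs20, sq_nonneg s]
    -- rewrite the log argument
    have harg : 1 - (k:ℝ) * (1 - 1 / A ^ 2) / ((k:ℝ) + σ ^ 2) = D / (1 + r) := by
      rw [hD_def, hk_eq]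
      have h1r : (0:ℝ) < 1 + r := by linarith
      field_simp
      ring
    rw [harg, hnstar, Real.log_div (ne_of_gt hD0) (by linarith), ← hA_def]
    -- now show: -(k*(1-1/A^2))*L - (2*k*L/A)*(log D - A) ≤ -(1/2)*k*L
    have hkL : (0:ℝ) < (k:ℝ) * L := by positivity
    have h := mul_le_mul_of_nonneg_left hKey2 (le_of_lt hkL)
    have hA2 : (0:ℝ) < A ^ 2 := by positivity
    rw [show -((k:ℝ) * (1 - 1 / A ^ 2)) * L - 2 * (k:ℝ) * L / A * (Real.log D - A)
        = ((k:ℝ) * L * (A ^ 2 + 1) - (k:ℝ) * L * (2 * A * Real.log D)) / A ^ 2 by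
        field_simp; ring,
      show -(1/2) * (k:ℝ) * L = (-(1/2) * (k:ℝ) * L * A ^ 2) / A ^ 2 by
        field_simp]
    rw [div_le_div_iff_of_pos_right hA2]
    linarith [h]
  · -- second bound
    set e : ℝ := Real.log L / (2 * L) with he_def
    clear_value e
    have hlogL : (0:ℝ) < Real.log L := Real.log_pos (by linarith)
    have he0 : (0:ℝ) < e := by rw [he_def]; positivity
    have he2 : e ≤ 1/2 := by
      rw [he_def, div_le_iff₀ (by linarith : (0:ℝ) < 2 * L)]
      have := Real.log_le_sub_one_of_pos hL0
      linarith
    have hks : (0:ℝ) < (k:ℝ) + σ ^ 2 := by linarith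
    set x : ℝ := e * (k:ℝ) / ((k:ℝ) + σ ^ 2) with hx_def
    clear_value x
    have hx0 : (0:ℝ) < x := by rw [hx_def]; positivity
    have hxe : x ≤ e := by
      rw [hx_def, div_le_iff₀ hks]
      nlinarith
    have hx12 : x ≤ 1/2 := le_trans hxe he2
    have h1x : (0:ℝ) < 1 - x := by linarith
    have hlogx : -Real.log (1 - x) ≤ 2 * x := by
      have h1 : Real.log (1 - x)⁻¹ ≤ (1 - x)⁻¹ - 1 :=
        Real.log_le_sub_one_of_pos (by positivity)
      rw [Real.log_inv] at h1
      have h2 : (1 - x)⁻¹ - 1 = x / (1 - x) := by field_simp; ring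
      have h3 : x / (1 - x) ≤ 2 * x := by
        rw [div_le_iff₀ h1x]; nlinarith
      linarith
    have hn0 : (0:ℝ) < nstar p k σ := by
      rw [hnstar]; positivity
    have hmul : nstar p k σ * (-Real.log (1 - x)) ≤ nstar p k σ * (2 * x) :=
      mul_le_mul_of_nonneg_left hlogx (le_of_lt hn0)
    have hbound : nstar p k σ * (2 * x) ≤ e * (k:ℝ) * L / 2 := by
      rw [hnstar, hx_def]
      have h8 : 8 * (k:ℝ) ≤ A * ((k:ℝ) + σ ^ 2) := by nlinarith
      have heq : 2 * (k:ℝ) * L / A * (2 * (e * (k:ℝ) / ((k:ℝ) + σ ^ 2)))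
          = 4 * e * L * (k:ℝ) * (k:ℝ) / (A * ((k:ℝ) + σ ^ 2)) := by
        field_simp; ring
      rw [heq, div_le_div_iff₀ (by positivity) (by norm_num)]
      nlinarith [mul_le_mul_of_nonneg_left h8
        (show (0:ℝ) ≤ e * L * (k:ℝ) by positivity)]
    rw [hnstar] at hmul hbound ⊢
    nlinarith [hmul, hbound]

end
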